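/- Let k ≥ 2 and h ≥ 1 be integers and C_k > 0 a real. Let the higher-priority tasks i = 1,…,k−1 have periods T_i > 0, execution times C_i ≥ 0, and utilizations U_i = C_i/T_i, indexed in non-increasing order of periods, i.e., T_1 ≥ T_2 ≥ ⋯ ≥ T_{k−1}, and assume Σ_{i=1}^{k−1} U_i < 1. Let B = ( h·C_k + Σ_{i=1}^{k−1} C_i − Σ_{i=1}^{k−1} U_i·(Σ_{ℓ=i}^{k−1} C_ℓ) ) / ( 1 − Σ_{i=1}^{k−1} U_i ). Then there exists a real t with 0 < t ≤ B such that h·C_k + Σ_{i=1}^{k−1} ⌈t/T_i⌉·C_i ≤ t. -/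

import Mathlib

private lemma ceil_swap_pair_sum (I : Finset ℕ) (u c θ : ℕ → ℝ)
    (hu : ∀ i ∈ I, 0 ≤ u i) (hc : ∀ i ∈ I, 0 ≤ c i)
    (hx : ∀ a ∈ I, ∀ b ∈ I, a ≤ b → u a * c b ≤ u b * c a) :
    ∑ i ∈ I, ∑ ℓ ∈ I, (if i ≤ ℓ then u i * c ℓ else 0)
      ≤ ∑ i ∈ I, ∑ ℓ ∈ I, (if θ i ≤ θ ℓ then u i * c ℓ else 0) := by
  classical
  set E : ℕ → ℕ → ℝ := fun a b => if a ≤ b then u a * c b else 0 with hE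
  set D : ℕ → ℕ → ℝ := fun a b => if θ a ≤ θ b then u a * c b else 0 with hD
  have hpoint : ∀ a ∈ I, ∀ b ∈ I, E a b + E b a ≤ D a b + D b a := by
    intro a ha b hb
    have hnnab : 0 ≤ u a * c b := mul_nonneg (hu a ha) (hc b hb)
    have hnnba : 0 ≤ u b * c a := mul_nonneg (hu b hb) (hc a ha)
    simp only [hE, hD]
    rcases lt_trichotomy a b with hab | hab | hab
    · rw [if_pos hab.le, if_neg (not_le.mpr hab)]
      rcases le_total (θ a) (θ b) with hθab | hθab
      · rw [if_pos hθab]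
        split_ifs <;> linarith
      · rw [if_pos hθab]
        have := hx a ha b hb hab.le
        split_ifs <;> linarith
    · subst hab
      simp
    · rw [if_neg (not_le.mpr hab), if_pos hab.le]
      rcases le_total (θ a) (θ b) with hθab | hθab
      · rw [if_pos hθab]
        have := hx b hb a ha hab.le
        split_ifs <;> linarith
      · rw [if_pos hθab]
        split_ifs <;> linarith
  have hswapD : ∑ i ∈ I, ∑ ℓ ∈ I, D ℓ i = ∑ i ∈ I, ∑ ℓ ∈ I, D i ℓ := Finset.sum_comm
  have hswapE : ∑ i ∈ I, ∑ ℓ ∈ I, E ℓ i = ∑ i ∈ I, ∑ ℓ ∈ I, E i ℓ := Finset.sum_comm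
  have h2 : ∑ i ∈ I, ∑ ℓ ∈ I, (E i ℓ + E ℓ i) ≤ ∑ i ∈ I, ∑ ℓ ∈ I, (D i ℓ + D ℓ i) :=
    Finset.sum_le_sum fun i hi => Finset.sum_le_sum fun ℓ hℓ => hpoint i hi ℓ hℓ
  simp only [Finset.sum_add_distrib] at h2
  linarith



/-- Lemma 12 / Theorem 5: quadratic response-time bound for the h-th job in
the level-k busy window under uniprocessor fixed-priority scheduling. -/
theorem uniprocessor_quadratic_response_time (k h : ℕ) (hk : 2 ≤ k) (hh : 1 ≤ h)
    (Ck : ℝ) (hCk : 0 < Ck)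
    (T C U : ℕ → ℝ)
    (hT : ∀ i ∈ Finset.Icc 1 (k - 1), 0 < T i)
    (hC : ∀ i ∈ Finset.Icc 1 (k - 1), 0 ≤ C i)
    (hU : ∀ i ∈ Finset.Icc 1 (k - 1), U i = C i / T i)
    (hsort : ∀ i j : ℕ, 1 ≤ i → i ≤ j → j ≤ k - 1 → T j ≤ T i)
    (hsum : ∑ i ∈ Finset.Icc 1 (k - 1), U i < 1)
    (B : ℝ)
    (hB : B = ((h : ℝ) * Ck + (∑ i ∈ Finset.Icc 1 (k - 1), C i)
      - ∑ i ∈ Finset.Icc 1 (k - 1), U i * ∑ ℓ ∈ Finset.Icc i (k - 1), C ℓ)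
      / (1 - ∑ i ∈ Finset.Icc 1 (k - 1), U i)) :
    ∃ t : ℝ, 0 < t ∧ t ≤ B ∧
      (h : ℝ) * Ck + (∑ i ∈ Finset.Icc 1 (k - 1), (⌈t / T i⌉ : ℝ) * C i) ≤ t := by
  classical
  set n := k - 1 with hn
  set I : Finset ℕ := Finset.Icc 1 n with hIdef
  have h1 : (0:ℝ) < 1 - ∑ i ∈ I, U i := by linarith
  have hhR : (1:ℝ) ≤ (h:ℝ) := by exact_mod_cast hh
  have hhCk : 0 < (h:ℝ) * Ck := by nlinarith
  have hUnn : ∀ i ∈ I, 0 ≤ U i := by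
    intro i hi; rw [hU i hi]; exact div_nonneg (hC i hi) (hT i hi).le
  set f : ℝ → ℝ := fun t => (h:ℝ) * Ck + ∑ i ∈ I, (⌈t / T i⌉ : ℝ) * C i with hfdef
  have hfmono : ∀ ⦃s t : ℝ⦄, s ≤ t → f s ≤ f t := by
    intro s t hst
    apply add_le_add_right
    apply Finset.sum_le_sum
    intro i hi
    have hTi := hT i hi
    have h2 : (⌈s / T i⌉ : ℤ) ≤ ⌈t / T i⌉ := Int.ceil_mono (by gcongr)
    exact mul_le_mul_of_nonneg_right (by exact_mod_cast h2) (hC i hi)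
  set S : Set ℝ := {t | f t ≤ t} with hSdef
  -- S is nonempty
  set t0 : ℝ := ((h:ℝ) * Ck + ∑ i ∈ I, C i) / (1 - ∑ i ∈ I, U i) with ht0
  have hCsum_nn : 0 ≤ ∑ i ∈ I, C i := Finset.sum_nonneg hC
  have ht0pos : 0 < t0 := div_pos (by linarith) h1
  have ht0S : t0 ∈ S := by
    show f t0 ≤ t0
    have hb : ∀ i ∈ I, (⌈t0 / T i⌉ : ℝ) * C i ≤ U i * t0 + C i := by
      intro i hi
      have hTi := hT i hi
      have h2 : (⌈t0 / T i⌉ : ℝ) ≤ t0 / T i + 1 := (Int.ceil_lt_add_one _).le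
      have h3 : (⌈t0 / T i⌉ : ℝ) * C i ≤ (t0 / T i + 1) * C i :=
        mul_le_mul_of_nonneg_right h2 (hC i hi)
      have h4 : (t0 / T i + 1) * C i = U i * t0 + C i := by
        rw [hU i hi]; field_simp
      linarith
    have h5 : f t0 ≤ (h:ℝ)*Ck + ∑ i ∈ I, (U i * t0 + C i) :=
      add_le_add_right (Finset.sum_le_sum hb) _
    have h6 : ∑ i ∈ I, (U i * t0 + C i) = (∑ i ∈ I, U i) * t0 + ∑ i ∈ I, C i := by
      rw [Finset.sum_add_distrib, Finset.sum_mul]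
    have h7 : t0 * (1 - ∑ i ∈ I, U i) = (h:ℝ)*Ck + ∑ i ∈ I, C i :=
      div_mul_cancel₀ _ h1.ne'
    have h8 : t0 * (1 - ∑ i ∈ I, U i) = t0 - (∑ i ∈ I, U i) * t0 := by ring
    rw [h6] at h5
    linarith
  have hSlb : ∀ t ∈ S, ((h:ℝ)*Ck)/(1 - ∑ i ∈ I, U i) ≤ t := by
    intro t ht
    have hft : f t ≤ t := ht
    have hlow : (h:ℝ)*Ck + (∑ i ∈ I, U i) * t ≤ f t := by
      have hb : ∀ i ∈ I, U i * t ≤ (⌈t / T i⌉:ℝ) * C i := by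
        intro i hi
        have hTi := hT i hi
        have h2 : t / T i ≤ (⌈t / T i⌉:ℝ) := Int.le_ceil _
        have h3 : (t / T i) * C i ≤ (⌈t / T i⌉:ℝ) * C i :=
          mul_le_mul_of_nonneg_right h2 (hC i hi)
        have h4 : U i * t = (t / T i) * C i := by
          rw [hU i hi]; field_simp
        linarith
      calc (h:ℝ)*Ck + (∑ i ∈ I, U i) * t = (h:ℝ)*Ck + ∑ i ∈ I, U i * t := by
            rw [Finset.sum_mul]
        _ ≤ f t := add_le_add_right (Finset.sum_le_sum hb) _
    rw [div_le_iff₀ h1]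
    nlinarith
  have hbdd : BddBelow S := ⟨_, hSlb⟩
  have hne : S.Nonempty := ⟨t0, ht0S⟩
  set R := sInf S with hRdef
  have hRlb : ((h:ℝ)*Ck)/(1 - ∑ i ∈ I, U i) ≤ R := le_csInf hne hSlb
  have hRpos : 0 < R := lt_of_lt_of_le (div_pos hhCk h1) hRlb
  have hRS : f R ≤ R := by
    by_contra hcon
    push_neg at hcon
    obtain ⟨t, htS, htlt⟩ := exists_lt_of_csInf_lt hne
      (show sInf S < R + (f R - R) by rw [← hRdef]; linarith)
    have h2 : R ≤ t := csInf_le hbdd htS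
    have h3 : f R ≤ f t := hfmono h2
    have h4 : f t ≤ t := htS
    linarith
  have hRfix : f R = R := by
    refine le_antisymm hRS ?_
    exact csInf_le hbdd (show f (f R) ≤ f R from hfmono hRS)
  set θ : ℕ → ℝ := fun i => ((⌈R / T i⌉ : ℝ) - 1) * T i with hθdef
  have hθlt : ∀ i ∈ I, θ i < R := by
    intro i hi
    have hTi := hT i hi
    have h2 : (⌈R / T i⌉ : ℝ) - 1 < R / T i := by
      have := Int.ceil_lt_add_one (R / T i); linarith
    calc θ i = ((⌈R / T i⌉ : ℝ) - 1) * T i := rfl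
      _ < (R / T i) * T i := by exact mul_lt_mul_of_pos_right h2 hTi
      _ = R := div_mul_cancel₀ _ hTi.ne'
  set σ : ℕ → ℝ := fun i => ∑ ℓ ∈ I, if θ i ≤ θ ℓ then C ℓ else 0 with hσdef
  have hθσ : ∀ i ∈ I, θ i ≤ R - σ i := by
    intro i hi
    have hθi : θ i < R := hθlt i hi
    have hfθ : θ i < f (θ i) := by
      by_contra hcon
      push_neg at hcon
      have : R ≤ θ i := csInf_le hbdd hcon
      linarith
    have hdiff : σ i ≤ ∑ ℓ ∈ I, ((⌈R / T ℓ⌉:ℝ) - (⌈θ i / T ℓ⌉:ℝ)) * C ℓ := by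
      apply Finset.sum_le_sum
      intro ℓ hℓ
      have hTℓ := hT ℓ hℓ
      by_cases hcase : θ i ≤ θ ℓ
      · rw [if_pos hcase]
        have h2 : θ i / T ℓ ≤ (⌈R / T ℓ⌉:ℝ) - 1 := by
          rw [div_le_iff₀ hTℓ]
          calc θ i ≤ θ ℓ := hcase
            _ = ((⌈R / T ℓ⌉:ℝ) - 1) * T ℓ := rfl
        have h3 : (⌈θ i / T ℓ⌉:ℤ) ≤ ⌈R / T ℓ⌉ - 1 := by
          apply Int.ceil_le.mpr
          push_cast
          exact h2
        have h4 : (⌈θ i / T ℓ⌉:ℝ) ≤ (⌈R / T ℓ⌉:ℝ) - 1 := by exact_mod_cast h3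
        nlinarith [hC ℓ hℓ]
      · rw [if_neg hcase]
        have h2 : (⌈θ i / T ℓ⌉:ℤ) ≤ ⌈R / T ℓ⌉ := Int.ceil_mono (by gcongr)
        have h3 : (⌈θ i / T ℓ⌉:ℝ) ≤ (⌈R / T ℓ⌉:ℝ) := by exact_mod_cast h2
        nlinarith [hC ℓ hℓ]
    have hsub : ∑ ℓ ∈ I, ((⌈R / T ℓ⌉:ℝ) - (⌈θ i / T ℓ⌉:ℝ)) * C ℓ = f R - f (θ i) := by
      simp only [hfdef, sub_mul, Finset.sum_sub_distrib]
      ring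
    rw [hsub, hRfix] at hdiff
    linarith
  have hterm : ∀ i ∈ I, (⌈R / T i⌉:ℝ) * C i = U i * θ i + C i := by
    intro i hi
    have hTi := hT i hi
    have : θ i = ((⌈R / T i⌉ : ℝ) - 1) * T i := rfl
    rw [this, hU i hi]
    field_simp
    ring
  have hmain : R * (1 - ∑ i ∈ I, U i) ≤
      (h:ℝ)*Ck + (∑ i ∈ I, C i) - ∑ i ∈ I, U i * σ i := by
    have e1 : R = (h:ℝ)*Ck + ∑ i ∈ I, (U i * θ i + C i) := by
      conv_lhs => rw [← hRfix]
      simp only [hfdef]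
      congr 1
      exact Finset.sum_congr rfl hterm
    have e2 : ∑ i ∈ I, (U i * θ i + C i) ≤ ∑ i ∈ I, (U i * (R - σ i) + C i) := by
      apply Finset.sum_le_sum
      intro i hi
      have := mul_le_mul_of_nonneg_left (hθσ i hi) (hUnn i hi)
      linarith
    have e3 : ∑ i ∈ I, (U i * (R - σ i) + C i)
        = (∑ i ∈ I, U i) * R - (∑ i ∈ I, U i * σ i) + ∑ i ∈ I, C i := by
      simp only [mul_sub]
      rw [Finset.sum_add_distrib, Finset.sum_sub_distrib, Finset.sum_mul]
    have e4 : R * (1 - ∑ i ∈ I, U i) = R - (∑ i ∈ I, U i) * R := by ring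
    rw [e3] at e2
    linarith
  have hseg : ∀ i ∈ I, (∑ ℓ ∈ Finset.Icc i n, C ℓ) = ∑ ℓ ∈ I, if i ≤ ℓ then C ℓ else 0 := by
    intro i hi
    have hi' := Finset.mem_Icc.mp hi
    rw [Finset.sum_ite, Finset.sum_const_zero, add_zero]
    apply Finset.sum_congr _ (fun _ _ => rfl)
    ext x
    simp only [Finset.mem_filter, hIdef, Finset.mem_Icc]
    omega
  have hUCle : ∀ a ∈ I, ∀ b ∈ I, a ≤ b → U a * C b ≤ U b * C a := by
    intro a ha b hb hab
    have ha' := Finset.mem_Icc.mp ha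
    have hb' := Finset.mem_Icc.mp hb
    have hTba : T b ≤ T a := hsort a b ha'.1 hab hb'.2
    have hTa := hT a ha
    have hTb := hT b hb
    rw [hU a ha, hU b hb, div_mul_eq_mul_div, div_mul_eq_mul_div,
      div_le_div_iff₀ hTa hTb]
    nlinarith [mul_le_mul_of_nonneg_left hTba (mul_nonneg (hC a ha) (hC b hb))]
  have hDsum : ∑ i ∈ I, U i * σ i = ∑ i ∈ I, ∑ ℓ ∈ I, (if θ i ≤ θ ℓ then U i * C ℓ else 0) := by
    apply Finset.sum_congr rfl
    intro i hi
    simp only [hσdef, Finset.mul_sum, mul_ite, mul_zero]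
  have hEsum : ∑ i ∈ I, U i * (∑ ℓ ∈ Finset.Icc i n, C ℓ)
      = ∑ i ∈ I, ∑ ℓ ∈ I, (if i ≤ ℓ then U i * C ℓ else 0) := by
    apply Finset.sum_congr rfl
    intro i hi
    rw [hseg i hi]
    simp only [Finset.mul_sum, mul_ite, mul_zero]
  have hfinal : ∑ i ∈ I, U i * (∑ ℓ ∈ Finset.Icc i n, C ℓ) ≤ ∑ i ∈ I, U i * σ i := by
    rw [hDsum, hEsum]
    exact ceil_swap_pair_sum I U C θ hUnn hC hUCle
  have hBnum : B * (1 - ∑ i ∈ I, U i) =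
      (h:ℝ)*Ck + (∑ i ∈ I, C i) - ∑ i ∈ I, U i * (∑ ℓ ∈ Finset.Icc i n, C ℓ) := by
    rw [hB]; exact div_mul_cancel₀ _ h1.ne'
  have hRB : R ≤ B := by
    have : R * (1 - ∑ i ∈ I, U i) ≤ B * (1 - ∑ i ∈ I, U i) := by
      rw [hBnum]; linarith
    exact le_of_mul_le_mul_right this h1
  exact ⟨R, hRpos, hRB, hRS⟩
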